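/- Let ℓ₁, ℓ₂ > 0 be real, α, β ∈ ℝ, and k ∈ ℂ with k ≠ 0. There exists a nonzero tuple (a₁, b₁, a₂, b₂, c₁, c₂) ∈ ℂ⁶ satisfying the linear system: a₁ + b₁ = c₁, a₂ + b₂ = c₁, ik·(a₁ − b₁ + a₂ − b₂ + c₁) = α·c₁, c₂ + a₁e^{ikℓ₁} − b₁e^{−ikℓ₁} = 0, c₂ + a₂e^{ikℓ₂} − b₂e^{−ikℓ₂} = 0, and βik·c₂ = a₁e^{ikℓ₁} + b₁e^{−ikℓ₁} + a₂e^{ikℓ₂} + b₂e^{−ikℓ₂} + c₂, if and only if (βk² + ikαβ + 3ik − α)·cos(kℓ₁)·cos(kℓ₂) + (−iβk² + iα + 2k)·sin(k(ℓ₁+ℓ₂)) − 2ik·sin(kℓ₁)·sin(kℓ₂) + 2ik = 0. -/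

import Mathlib

open Complex

private lemma cons_val_five {α : Type*} (x0 x1 x2 x3 x4 x5 : α) :
    ![x0, x1, x2, x3, x4, x5] (5 : Fin 6) = x5 := rfl

set_option maxHeartbeats 4000000 in
set_option maxRecDepth 8000 in
private lemma det_aux (α β k E1 F1 E2 F2 : ℂ) (hf1 : E1 * F1 = 1) (hf2 : E2 * F2 = 1) :
    Matrix.det !![1,1,0,0,-1,0;
       0,0,1,1,-1,0;
       Complex.I*k, -(Complex.I*k), Complex.I*k, -(Complex.I*k), Complex.I*k - α, 0;
       E1, -F1, 0,0,0,1;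
       0,0,E2,-F2,0,1;
       -E1,-F1,-E2,-F2,0, β*(Complex.I*k) - 1]
    = 4*((β*k^2 + Complex.I*k*α*β + 3*Complex.I*k - α) * ((E1+F1)/2) * ((E2+F2)/2)
      + (-(Complex.I*β*k^2) + Complex.I*α + 2*k) * ((F1*F2 - E1*E2)*Complex.I/2)
      - 2*Complex.I*k*((F1-E1)*Complex.I/2)*((F2-E2)*Complex.I/2)
      + 2*Complex.I*k) := by
  simp (config := {decide := true}) [Matrix.det_succ_row_zero, Fin.sum_univ_succ, Fin.succAbove]
  linear_combination (4*Complex.I*k)*hf1 + (4*Complex.I*k)*hf2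
    + ((-2)*α*F1*F2 + 2*α*E1*E2 - k^2*β*F1*F2 - k^2*β*F1*E2 - k^2*β*E1*F2 - k^2*β*E1*E2
      + 2*Complex.I*k*F1*F2 + (-2)*Complex.I*k*F1*E2 + (-2)*Complex.I*k*E1*F2
      + 2*Complex.I*k*E1*E2) * Complex.I_sq

/-- Resonance condition for a loop of two edges of lengths `ℓ₁`, `ℓ₂` with one lead at
each of the two vertices, a `δ`-coupling of strength `α` at the left vertex and a
`δ′_s`-coupling of strength `β` at the right vertex: a nontrivial generalized
eigenfunction exists iff `(βk² + ikαβ + 3ik - α) cos kℓ₁ cos kℓ₂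
+ (-iβk² + iα + 2k) sin k(ℓ₁+ℓ₂) - 2ik sin kℓ₁ sin kℓ₂ + 2ik = 0`. -/
theorem stmt_16 (ℓ₁ ℓ₂ : ℝ) (hℓ₁ : 0 < ℓ₁) (hℓ₂ : 0 < ℓ₂) (α β : ℝ) (k : ℂ)
    (hk : k ≠ 0) :
    (∃ a₁ b₁ a₂ b₂ c₁ c₂ : ℂ,
      (a₁, b₁, a₂, b₂, c₁, c₂) ≠ (0, 0, 0, 0, 0, 0) ∧
      a₁ + b₁ = c₁ ∧
      a₂ + b₂ = c₁ ∧
      Complex.I * k * (a₁ - b₁ + a₂ - b₂ + c₁) = α * c₁ ∧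
      c₂ + a₁ * Complex.exp (Complex.I * k * ℓ₁)
        - b₁ * Complex.exp (-(Complex.I * k * ℓ₁)) = 0 ∧
      c₂ + a₂ * Complex.exp (Complex.I * k * ℓ₂)
        - b₂ * Complex.exp (-(Complex.I * k * ℓ₂)) = 0 ∧
      (β : ℂ) * Complex.I * k * c₂
        = a₁ * Complex.exp (Complex.I * k * ℓ₁) + b₁ * Complex.exp (-(Complex.I * k * ℓ₁))
          + a₂ * Complex.exp (Complex.I * k * ℓ₂) + b₂ * Complex.exp (-(Complex.I * k * ℓ₂))
          + c₂)
    ↔ ((β : ℂ) * k ^ 2 + Complex.I * k * α * β + 3 * Complex.I * k - α)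
        * Complex.cos (k * ℓ₁) * Complex.cos (k * ℓ₂)
      + (-(Complex.I * β * k ^ 2) + Complex.I * α + 2 * k)
        * Complex.sin (k * (ℓ₁ + ℓ₂))
      - 2 * Complex.I * k * Complex.sin (k * ℓ₁) * Complex.sin (k * ℓ₂)
      + 2 * Complex.I * k = 0 := by
  set E1 := Complex.exp (Complex.I * k * ℓ₁) with hE1def
  set E2 := Complex.exp (Complex.I * k * ℓ₂) with hE2def
  have hE1 : E1 ≠ 0 := Complex.exp_ne_zero _
  have hE2 : E2 ≠ 0 := Complex.exp_ne_zero _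
  have hf1 : E1 * E1⁻¹ = 1 := mul_inv_cancel₀ hE1
  have hf2 : E2 * E2⁻¹ = 1 := mul_inv_cancel₀ hE2
  have hF1 : Complex.exp (-(Complex.I * k * ℓ₁)) = E1⁻¹ := by
    rw [Complex.exp_neg, hE1def]
  have hF2 : Complex.exp (-(Complex.I * k * ℓ₂)) = E2⁻¹ := by
    rw [Complex.exp_neg, hE2def]
  have hc1 : Complex.cos (k * ℓ₁) = (E1 + E1⁻¹) / 2 := by
    rw [Complex.cos, show (k*(ℓ₁:ℂ))*I = Complex.I*k*ℓ₁ by ring,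
      show -(k*(ℓ₁:ℂ))*I = -(Complex.I*k*ℓ₁) by ring, Complex.exp_neg, hE1def]
  have hc2 : Complex.cos (k * ℓ₂) = (E2 + E2⁻¹) / 2 := by
    rw [Complex.cos, show (k*(ℓ₂:ℂ))*I = Complex.I*k*ℓ₂ by ring,
      show -(k*(ℓ₂:ℂ))*I = -(Complex.I*k*ℓ₂) by ring, Complex.exp_neg, hE2def]
  have hs1 : Complex.sin (k * ℓ₁) = (E1⁻¹ - E1) * Complex.I / 2 := by
    rw [Complex.sin, show (k*(ℓ₁:ℂ))*I = Complex.I*k*ℓ₁ by ring,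
      show -(k*(ℓ₁:ℂ))*I = -(Complex.I*k*ℓ₁) by ring, Complex.exp_neg, hE1def]
  have hs2 : Complex.sin (k * ℓ₂) = (E2⁻¹ - E2) * Complex.I / 2 := by
    rw [Complex.sin, show (k*(ℓ₂:ℂ))*I = Complex.I*k*ℓ₂ by ring,
      show -(k*(ℓ₂:ℂ))*I = -(Complex.I*k*ℓ₂) by ring, Complex.exp_neg, hE2def]
  have hs12 : Complex.sin (k * ((ℓ₁:ℝ) + (ℓ₂:ℝ) : ℂ)) = (E1⁻¹*E2⁻¹ - E1*E2) * Complex.I / 2 := by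
    rw [Complex.sin, show (k*((ℓ₁:ℂ)+(ℓ₂:ℂ)))*I = Complex.I*k*ℓ₁ + Complex.I*k*ℓ₂ by ring,
      show -(k*((ℓ₁:ℂ)+(ℓ₂:ℂ)))*I = -(Complex.I*k*ℓ₁ + Complex.I*k*ℓ₂) by ring,
      Complex.exp_neg, Complex.exp_add, hE1def, hE2def, mul_inv]
  set M : Matrix (Fin 6) (Fin 6) ℂ :=
    !![1,1,0,0,-1,0;
       0,0,1,1,-1,0;
       Complex.I*k, -(Complex.I*k), Complex.I*k, -(Complex.I*k), Complex.I*k - (α:ℂ), 0;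
       E1, -E1⁻¹, 0,0,0,1;
       0,0,E2,-E2⁻¹,0,1;
       -E1,-E1⁻¹,-E2,-E2⁻¹,0, (β:ℂ)*(Complex.I*k) - 1] with hM
  have key : (∃ v ≠ 0, M.mulVec v = 0) ↔ M.det = 0 :=
    Matrix.exists_mulVec_eq_zero_iff
  have equiv1 : (∃ a₁ b₁ a₂ b₂ c₁ c₂ : ℂ,
      (a₁, b₁, a₂, b₂, c₁, c₂) ≠ (0, 0, 0, 0, 0, 0) ∧
      a₁ + b₁ = c₁ ∧
      a₂ + b₂ = c₁ ∧
      Complex.I * k * (a₁ - b₁ + a₂ - b₂ + c₁) = α * c₁ ∧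
      c₂ + a₁ * E1 - b₁ * Complex.exp (-(Complex.I * k * ℓ₁)) = 0 ∧
      c₂ + a₂ * E2 - b₂ * Complex.exp (-(Complex.I * k * ℓ₂)) = 0 ∧
      (β : ℂ) * Complex.I * k * c₂
        = a₁ * E1 + b₁ * Complex.exp (-(Complex.I * k * ℓ₁))
          + a₂ * E2 + b₂ * Complex.exp (-(Complex.I * k * ℓ₂))
          + c₂) ↔ (∃ v ≠ 0, M.mulVec v = 0) := by
    simp only [hF1, hF2]
    constructor
    · rintro ⟨a₁, b₁, a₂, b₂, c₁, c₂, hne, e1, e2, e3, e4, e5, e6⟩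
      refine ⟨![a₁, b₁, a₂, b₂, c₁, c₂], ?_, ?_⟩
      · intro h
        apply hne
        simp only [Matrix.cons_eq_zero_iff, Matrix.zero_empty, and_true] at h
        obtain ⟨h0, h1, h2, h3, h4, h5⟩ := h
        simp [h0, h1, h2, h3, h4, h5]
      · rw [hM]
        simp only [Matrix.cons_mulVec, Matrix.cons_dotProduct, Matrix.dotProduct_of_isEmpty,
          Matrix.head_cons, Matrix.tail_cons, Matrix.cons_eq_zero_iff,
          Matrix.zero_empty, and_true, Matrix.empty_eq, eq_self_iff_true, true_and, Matrix.dotProduct_of_isEmpty, add_zero]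
        refine ⟨?_, ?_, ?_, ?_, ?_, ?_⟩
        · linear_combination e1
        · linear_combination e2
        · linear_combination e3
        · linear_combination e4
        · linear_combination e5
        · linear_combination e6
    · rintro ⟨v, hv, hMv⟩
      have hveq : v = ![v 0, v 1, v 2, v 3, v 4, v 5] := by
        funext i; fin_cases i <;> rfl
      rw [hveq, hM] at hMv
      simp only [Matrix.cons_mulVec, Matrix.cons_dotProduct, Matrix.dotProduct_of_isEmpty,
        Matrix.head_cons, Matrix.tail_cons, Matrix.cons_eq_zero_iff,
        Matrix.zero_empty, and_true, Matrix.empty_eq, eq_self_iff_true, true_and, Matrix.dotProduct_of_isEmpty, add_zero] at hMv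
      obtain ⟨h0, h1, h2, h3, h4, h5⟩ := hMv
      refine ⟨v 0, v 1, v 2, v 3, v 4, v 5, ?_, ?_, ?_, ?_, ?_, ?_, ?_⟩
      · intro h
        apply hv
        simp only [Prod.mk.injEq] at h
        obtain ⟨g0, g1, g2, g3, g4, g5⟩ := h
        rw [hveq]
        funext i
        fin_cases i <;> simp [g0, g1, g2, g3, g4, g5, cons_val_five]
      · linear_combination h0
      · linear_combination h1
      · linear_combination h2
      · linear_combination h3
      · linear_combination h4
      · linear_combination h5
  rw [equiv1, key, hM, det_aux (α:ℂ) (β:ℂ) k E1 E1⁻¹ E2 E2⁻¹ hf1 hf2,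
    hc1, hc2, hs1, hs2, hs12]
  constructor
  · intro h
    have h4 : (4:ℂ) ≠ 0 := by norm_num
    have := (mul_eq_zero.mp h).resolve_left h4
    linear_combination this
  · intro h
    linear_combination 4 * h
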